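/- Let p be a prime, m ≥ 0, and 0 ≤ j ≤ m-1. Let t ≥ 0 be an integer such that there is no a with 0 ≤ a ≤ p^j − 1 and t ≡ (p-1)p^j + a (mod p^{j+1}). Then the coordinatewise addition map Λ^0(p^m, t) × Λ^0(p^m, p^j) → Λ^0(p^m, t + p^j) is surjective, where Λ^0(p^m, s) is the set of tuples (λ_{p^0}, …, λ_{p^m}) of nonnegative integers with ∑_{i=0}^m p^i λ_{p^i} = s. -/

import Mathlib

/-- Greedy representation lemma: if the weighted sum of `ρ` over `range (j+1)`
is at least `c * p^j`, we can find `μ ≤ ρ` supported on `range (j+1)` whose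
weighted sum is exactly `c * p^j`. -/
lemma lambda0_aux (p : ℕ) : ∀ (j c : ℕ) (ρ : ℕ → ℕ),
    c * p ^ j ≤ ∑ i ∈ Finset.range (j + 1), p ^ i * ρ i →
    ∃ μ : ℕ → ℕ, (∀ i, μ i ≤ ρ i) ∧ (∀ i, j < i → μ i = 0) ∧
      ∑ i ∈ Finset.range (j + 1), p ^ i * μ i = c * p ^ j := by
  intro j
  induction j with
  | zero =>
    intro c ρ h
    rw [pow_zero, mul_one, Finset.range_one, Finset.sum_singleton, pow_zero, one_mul] at h
    refine ⟨fun i => if i = 0 then c else 0, ?_, ?_, ?_⟩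
    · intro i
      by_cases hi : i = 0
      · subst hi; simpa using h
      · simp [hi]
    · intro i hi
      have : i ≠ 0 := by omega
      simp [this]
    · rw [Finset.range_one, Finset.sum_singleton]; simp
  | succ j ih =>
    intro c ρ h
    rw [Finset.sum_range_succ] at h
    set d := min c (ρ (j + 1)) with hd
    have hle : (c - d) * p * p ^ j ≤ ∑ i ∈ Finset.range (j + 1), p ^ i * ρ i := by
      rcases le_or_gt c (ρ (j + 1)) with hc | hc
      · have hdc : d = c := by omega
        simp [hdc]
      · have hdr : d = ρ (j + 1) := by omega
        have key : (c - d) * p * p ^ j + p ^ (j + 1) * ρ (j + 1) = c * p ^ (j + 1) := by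
          rw [hdr, mul_assoc, ← pow_succ', mul_comm (p ^ (j + 1)) (ρ (j + 1)), ← add_mul,
            Nat.sub_add_cancel (le_of_lt hc)]
        omega
    obtain ⟨μ₀, hμ₀le, hμ₀supp, hμ₀sum⟩ := ih ((c - d) * p) ρ hle
    refine ⟨fun i => if i = j + 1 then d else μ₀ i, ?_, ?_, ?_⟩
    · intro i
      by_cases hi : i = j + 1
      · simp [hi, hd]
      · simp [hi, hμ₀le i]
    · intro i hi
      have h1 : i ≠ j + 1 := by omega
      simp [h1, hμ₀supp i (by omega)]
    · rw [Finset.sum_range_succ]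
      have heq : ∑ i ∈ Finset.range (j + 1), p ^ i * (if i = j + 1 then d else μ₀ i)
          = ∑ i ∈ Finset.range (j + 1), p ^ i * μ₀ i := by
        apply Finset.sum_congr rfl
        intro i hi
        have : i ≠ j + 1 := by simp at hi; omega
        simp [this]
      rw [heq, hμ₀sum]
      beta_reduce
      rw [if_pos rfl]
      have hdc : d ≤ c := min_le_left _ _
      rw [mul_assoc, ← pow_succ', mul_comm (p ^ (j + 1)) d, ← add_mul,
        Nat.sub_add_cancel hdc]

theorem lambda0_prime_power_addition_surjective (p m j t : ℕ) (hp : p.Prime)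
    (hm : 1 ≤ m) (hj : j < m)
    (ht : ∀ a : ℕ, a < p ^ j → t % p ^ (j + 1) ≠ (p - 1) * p ^ j + a) :
    ∀ ρ : Fin (m + 1) → ℕ, (∑ i : Fin (m + 1), p ^ (i : ℕ) * ρ i) = t + p ^ j →
      ∃ lam lam' : Fin (m + 1) → ℕ,
        (∑ i : Fin (m + 1), p ^ (i : ℕ) * lam i) = t ∧
        (∑ i : Fin (m + 1), p ^ (i : ℕ) * lam' i) = p ^ j ∧
        lam + lam' = ρ := by
  intro ρ hρ
  have hp1 : 1 < p := hp.one_lt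
  set n := p ^ (j + 1) with hn
  have hnpos : 0 < n := Nat.pow_pos (by omega)
  have hp0 : p - 1 + 1 = p := by omega
  have hn' : (p - 1) * p ^ j + p ^ j = n := by
    have h1 : (p - 1) * p ^ j + p ^ j = (p - 1 + 1) * p ^ j := by rw [add_mul, one_mul]
    rw [h1, hp0, hn, pow_succ']
  -- Step 1: t % n < (p-1) * p^j
  have htlt : t % n < (p - 1) * p ^ j := by
    by_contra hcon
    push_neg at hcon
    have hlt : t % n < n := Nat.mod_lt _ hnpos
    exact ht (t % n - (p - 1) * p ^ j) (by omega) (by omega)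
  -- Step 2: (t + p^j) % n = t % n + p^j
  have hmodadd : (t + p ^ j) % n = t % n + p ^ j := by
    conv_lhs => rw [← Nat.mod_add_mod]
    exact Nat.mod_eq_of_lt (by omega)
  -- extend ρ to ℕ
  set ρ' : ℕ → ℕ := fun i => if h : i < m + 1 then ρ ⟨i, h⟩ else 0 with hρ'def
  have hsum : ∑ i ∈ Finset.range (m + 1), p ^ i * ρ' i = t + p ^ j := by
    rw [← hρ, ← Fin.sum_univ_eq_sum_range (fun i => p ^ i * ρ' i) (m + 1)]
    apply Finset.sum_congr rfl
    intro i _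
    simp [hρ'def, i.isLt, Fin.is_le i]
  -- split the sum
  have hsplit : ∑ i ∈ Finset.range (j + 1), p ^ i * ρ' i
      + ∑ i ∈ Finset.Ico (j + 1) (m + 1), p ^ i * ρ' i = t + p ^ j := by
    rw [← hsum]; simp only [Finset.range_eq_Ico]
    exact Finset.sum_Ico_consecutive (fun i => p ^ i * ρ' i) (Nat.zero_le (j + 1)) (by omega : j + 1 ≤ m + 1)
  set S := ∑ i ∈ Finset.range (j + 1), p ^ i * ρ' i with hS
  have hdvd : n ∣ ∑ i ∈ Finset.Ico (j + 1) (m + 1), p ^ i * ρ' i := by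
    apply Finset.dvd_sum
    intro i hi
    simp only [Finset.mem_Ico] at hi
    exact Dvd.dvd.mul_right (pow_dvd_pow p hi.1) _
  obtain ⟨q, hq⟩ := hdvd
  have hSmod : S % n = (t + p ^ j) % n := by
    have heq : t + p ^ j = S + n * q := by omega
    rw [heq, Nat.add_mul_mod_self_left]
  have hSge : p ^ j ≤ S := by
    have := Nat.mod_le S n
    omega
  -- apply the aux lemma with c = 1
  obtain ⟨μ, hμle, hμsupp, hμsum⟩ := lambda0_aux p j 1 ρ' (by rw [one_mul]; exact hSge)
  have hμρ : ∀ i : Fin (m + 1), μ i.val ≤ ρ i := by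
    intro i
    have := hμle i.val
    simpa [hρ'def, i.isLt, Fin.is_le i] using this
  have hzero : ∑ i ∈ Finset.Ico (j + 1) (m + 1), p ^ i * μ i = 0 := by
    apply Finset.sum_eq_zero
    intro i hi
    simp only [Finset.mem_Ico] at hi
    rw [hμsupp i (by omega), mul_zero]
  have h2 : ∑ i : Fin (m + 1), p ^ (i : ℕ) * μ i.val = p ^ j := by
    rw [Fin.sum_univ_eq_sum_range (fun i => p ^ i * μ i) (m + 1)]
    have : ∑ i ∈ Finset.range (j + 1), p ^ i * μ i
        + ∑ i ∈ Finset.Ico (j + 1) (m + 1), p ^ i * μ i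
        = ∑ i ∈ Finset.range (m + 1), p ^ i * μ i := by
      simp only [Finset.range_eq_Ico]
      exact Finset.sum_Ico_consecutive (fun i => p ^ i * μ i) (Nat.zero_le (j + 1)) (by omega : j + 1 ≤ m + 1)
    omega
  have h1 : ∑ i : Fin (m + 1), p ^ (i : ℕ) * (ρ i - μ i.val)
      + ∑ i : Fin (m + 1), p ^ (i : ℕ) * μ i.val = t + p ^ j := by
    rw [← Finset.sum_add_distrib, ← hρ]
    apply Finset.sum_congr rfl
    intro i _
    rw [← Nat.mul_add, Nat.sub_add_cancel (hμρ i)]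
  refine ⟨fun i => ρ i - μ i.val, fun i => μ i.val, ?_, ?_, ?_⟩
  · show ∑ i : Fin (m + 1), p ^ (i : ℕ) * (ρ i - μ i.val) = t
    omega
  · exact h2
  · funext i
    simp only [Pi.add_apply]
    have := hμρ i
    omega
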